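/- If Y ⊟ X, Z ⊟ X, and Y, Z are symmetric, then |Y △ Z| ◁ |X|. -/

import Mathlib

/-- Bicardinal equivalence: `X ⊟ Y` iff `|X| = |Y|` and `|Xᶜ| = |Yᶜ|`. -/
def Bicard {M : Type*} (X Y : Set M) : Prop :=
  Cardinal.mk X = Cardinal.mk Y ∧ Cardinal.mk (Xᶜ : Set M) = Cardinal.mk (Yᶜ : Set M)

/-- `a ⊴ b`: there is `n : ℕ` with `a ≤ n * b`. -/
def Trile (a b : Cardinal) : Prop := ∃ n : ℕ, a ≤ n * b

/-- `a ◁ b`: `a ⊴ b` and not `b ⊴ a`. -/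
def Trilt (a b : Cardinal) : Prop := Trile a b ∧ ¬ Trile b a

/-- Permutation invariance of a relation on concepts. -/
def PermInv {M : Type*} (E : Set M → Set M → Prop) : Prop :=
  ∀ (π : M ≃ M) (X Y : Set M), E X Y ↔ E (π '' X) (π '' Y)

/-- The bicardinal slice `E(⊟)_X` is trivial. -/
def TrivialSlice {M : Type*} (E : Set M → Set M → Prop) (X : Set M) : Prop :=
  ∀ Y Z : Set M, Bicard Y X → Bicard Z X → E Y Z

/-- The bicardinal slice `E(⊟)_X` is separative (refines a separation). -/
def Separative {M : Type*} (E : Set M → Set M → Prop) (X : Set M) : Prop :=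
  ∀ Y Z : Set M, Bicard Y X → Bicard Z X → E Y Z →
    Trilt (Cardinal.mk (symmDiff Y Z : Set M)) (Cardinal.mk X)

/-- The bicardinal slice `E(⊟)_X` is complementative (refines a complementation). -/
def Complementative {M : Type*} (E : Set M → Set M → Prop) (X : Set M) : Prop :=
  ∀ Y Z : Set M, Bicard Y X → Bicard Z X → E Y Z →
    Trilt (Cardinal.mk (symmDiff Y Z : Set M)) (Cardinal.mk X) ∨
      Trilt (Cardinal.mk ((symmDiff Y Z)ᶜ : Set M)) (Cardinal.mk X)

/-- Properly separative: separative and not trivial. -/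
def ProperlySeparative {M : Type*} (E : Set M → Set M → Prop) (X : Set M) : Prop :=
  Separative E X ∧ ¬ TrivialSlice E X

/-- Properly complementative: complementative, not separative, and not trivial. -/
def ProperlyComplementative {M : Type*} (E : Set M → Set M → Prop) (X : Set M) : Prop :=
  Complementative E X ∧ ¬ Separative E X ∧ ¬ TrivialSlice E X


/-- `Y` and `Z` are symmetric. -/
def SymmetricPair {M : Type*} (Y Z : Set M) : Prop :=
  Cardinal.mk Y = Cardinal.mk Z ∧
  ∃ H : Set M, H ≠ Y ∧ H ≠ Z ∧ Cardinal.mk H = Cardinal.mk Y ∧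
    ¬ Trile (Cardinal.mk (H \ (Y ∪ Z) : Set M)) (Cardinal.mk (Y \ Z : Set M)) ∧
    ¬ Trile (Cardinal.mk (H \ (Y ∪ Z) : Set M)) (Cardinal.mk (Z \ Y : Set M))

/-- Symmetric pairs in a bicardinal slice have small symmetric difference. -/
theorem symmetric_small_symmDiff {M : Type*} (X Y Z : Set M)
    (hY : Bicard Y X) (hZ : Bicard Z X) (hSym : SymmetricPair Y Z) :
    Trilt (Cardinal.mk (symmDiff Y Z : Set M)) (Cardinal.mk X) := by
  obtain ⟨hY1, -⟩ := hY
  obtain ⟨hZ1, -⟩ := hZ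
  obtain ⟨hYZ, H, -, -, hH, hb, hc⟩ := hSym
  have hle : Cardinal.mk (symmDiff Y Z : Set M) ≤
      Cardinal.mk (Y \ Z : Set M) + Cardinal.mk (Z \ Y : Set M) := by
    rw [Set.symmDiff_def]
    exact Cardinal.mk_union_le _ _
  have h1 : Cardinal.mk (Y \ Z : Set M) ≤ Cardinal.mk X := by
    calc Cardinal.mk (Y \ Z : Set M) ≤ Cardinal.mk Y :=
          Cardinal.mk_le_mk_of_subset Set.diff_subset
      _ = Cardinal.mk X := hY1
  have h2 : Cardinal.mk (Z \ Y : Set M) ≤ Cardinal.mk X := by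
    calc Cardinal.mk (Z \ Y : Set M) ≤ Cardinal.mk Z :=
          Cardinal.mk_le_mk_of_subset Set.diff_subset
      _ = Cardinal.mk X := hZ1
  constructor
  · exact ⟨2, by
      calc Cardinal.mk (symmDiff Y Z : Set M)
          ≤ Cardinal.mk (Y \ Z : Set M) + Cardinal.mk (Z \ Y : Set M) := hle
        _ ≤ Cardinal.mk X + Cardinal.mk X := add_le_add h1 h2
        _ = (2 : ℕ) * Cardinal.mk X := by push_cast; rw [two_mul]⟩
  · rintro ⟨n, hn⟩
    have ha : Cardinal.mk (H \ (Y ∪ Z) : Set M) ≤ Cardinal.mk X := by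
      calc Cardinal.mk (H \ (Y ∪ Z) : Set M) ≤ Cardinal.mk H :=
            Cardinal.mk_le_mk_of_subset Set.diff_subset
        _ = Cardinal.mk X := hH.trans hY1
    have key : Cardinal.mk (H \ (Y ∪ Z) : Set M) ≤
        (n : Cardinal) * (Cardinal.mk (Y \ Z : Set M) + Cardinal.mk (Z \ Y : Set M)) :=
      ha.trans (hn.trans (mul_le_mul_right hle _))
    rcases le_total (Cardinal.mk (Y \ Z : Set M)) (Cardinal.mk (Z \ Y : Set M)) with h | h
    · refine hc ⟨2 * n, ?_⟩
      calc Cardinal.mk (H \ (Y ∪ Z) : Set M)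
          ≤ (n : Cardinal) * (Cardinal.mk (Y \ Z : Set M) + Cardinal.mk (Z \ Y : Set M)) := key
        _ ≤ (n : Cardinal) * (Cardinal.mk (Z \ Y : Set M) + Cardinal.mk (Z \ Y : Set M)) := by
            exact mul_le_mul_right (add_le_add_left h _) _
        _ = ((2 * n : ℕ) : Cardinal) * Cardinal.mk (Z \ Y : Set M) := by
            push_cast; ring
    · refine hb ⟨2 * n, ?_⟩
      calc Cardinal.mk (H \ (Y ∪ Z) : Set M)
          ≤ (n : Cardinal) * (Cardinal.mk (Y \ Z : Set M) + Cardinal.mk (Z \ Y : Set M)) := key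
        _ ≤ (n : Cardinal) * (Cardinal.mk (Y \ Z : Set M) + Cardinal.mk (Y \ Z : Set M)) := by
            exact mul_le_mul_right (add_le_add_right h _) _
        _ = ((2 * n : ℕ) : Cardinal) * Cardinal.mk (Y \ Z : Set M) := by
            push_cast; ring
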